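/- There exist a symmetric probability density P > 0 on (0,∞)² (with respect to Lebesgue measure, up to normalization) and a measurable function u on (0,∞) such that U := G_{1,2}(u) satisfies U ∈ L^1((0,∞)²; P d²x), but u ∉ L^1((0,∞); P_{(1)} dx), where P_{(1)}(x) = ∫ P(x,y) dy. -/

import Mathlib

open MeasureTheory Set

noncomputable section Ex3aux

/-- the kernel on indices -/
def pf (i j : ℕ) : ℝ :=
  if i + 1 = j ∨ j + 1 = i then ((i : ℝ) + j)⁻¹ ^ 2 else ((i : ℝ) + j)⁻¹ ^ 4

def Pf (x y : ℝ) : ℝ := pf ⌈x⌉₊ ⌈y⌉₊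

def uf (x : ℝ) : ℝ := 2 * (-1 : ℝ) ^ ⌈x⌉₊ * (⌈x⌉₊ : ℝ)

def ff (t : ℝ) : ℝ := Real.exp (Real.log (1 + t) * (-(3/2)))

lemma ff_eq {t : ℝ} (ht : 0 < 1 + t) : ff t = (1 + t) ^ (-(3/2) : ℝ) :=
  (Real.rpow_def_of_pos ht _).symm

def G1 (p : ℝ × ℝ) : ℝ :=
  if p.1 - 2 < p.2 ∧ p.2 < p.1 + 2 then 4 * ((1 + p.1 + p.2)⁻¹) ^ 2 else 0

def GG (p : ℝ × ℝ) : ℝ := G1 p + 8 * ff p.1 * ff p.2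

lemma pf_nonneg (i j : ℕ) : 0 ≤ pf i j := by
  unfold pf; split <;> positivity

lemma Pf_nonneg (x y : ℝ) : 0 ≤ Pf x y := pf_nonneg _ _

lemma pf_symm (i j : ℕ) : pf i j = pf j i := by
  unfold pf
  rw [add_comm (i : ℝ) (j : ℝ)]
  exact if_congr or_comm rfl rfl

lemma Pf_symm (x y : ℝ) : Pf x y = Pf y x := pf_symm _ _

lemma Pf_pos {x y : ℝ} (hx : 0 < x) (hy : 0 < y) : 0 < Pf x y := by
  have hi : 0 < ⌈x⌉₊ := Nat.ceil_pos.mpr hx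
  have hj : 0 < ⌈y⌉₊ := Nat.ceil_pos.mpr hy
  have h : (0:ℝ) < (⌈x⌉₊ : ℝ) + (⌈y⌉₊ : ℝ) := by positivity
  unfold Pf pf; split <;> positivity

lemma measPf : Measurable fun p : ℝ × ℝ => Pf p.1 p.2 := by
  have : (fun p : ℝ × ℝ => Pf p.1 p.2)
      = (fun q : ℕ × ℕ => pf q.1 q.2) ∘ fun p : ℝ × ℝ => (⌈p.1⌉₊, ⌈p.2⌉₊) := rfl
  rw [this]
  exact (measurable_of_countable _).comp
    ((Nat.measurable_ceil.comp measurable_fst).prodMk (Nat.measurable_ceil.comp measurable_snd))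

lemma measUf : Measurable uf := by
  have : uf = (fun n : ℕ => 2 * (-1 : ℝ) ^ n * (n : ℝ)) ∘ Nat.ceil := rfl
  rw [this]
  exact (measurable_of_countable _).comp Nat.measurable_ceil

lemma measG1 : Measurable G1 := by
  apply Measurable.ite
  · exact (measurableSet_lt (measurable_fst.sub measurable_const) measurable_snd).inter
      (measurableSet_lt measurable_snd (measurable_fst.add measurable_const))
  · exact ((((measurable_const.add measurable_fst).add measurable_snd).inv.pow
      measurable_const).const_mul 4)
  · exact measurable_const

lemma measff : Measurable ff :=
  (((Real.measurable_log.comp (measurable_const.add measurable_id)).mul_const _).exp)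

lemma ff_nonneg (t : ℝ) : 0 ≤ ff t := (Real.exp_pos _).le

/-- helper inequality -/
lemma inv_pow_le_inv_pow {a b : ℝ} (n : ℕ) (ha : 0 < a) (hab : a ≤ b) :
    b⁻¹ ^ n ≤ a⁻¹ ^ n :=
  pow_le_pow_left₀ (inv_nonneg.mpr (ha.trans_le hab).le) (inv_anti₀ ha hab) n

lemma scale2 {a s : ℝ} (ha : 0 < a) (h : a ≤ 2 * s) : s⁻¹ ^ 2 ≤ 4 * a⁻¹ ^ 2 := by
  have h2 := inv_pow_le_inv_pow 2 ha h
  have h3 : (2 * s)⁻¹ ^ 2 = 4⁻¹ * s⁻¹ ^ 2 := by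
    rw [mul_inv]; ring
  rw [h3] at h2
  linarith

lemma cube_bound {x y : ℝ} (hx : 0 < x) (hy : 0 < y) {s : ℝ} (hs : 0 < s)
    (h : 1 + x + y ≤ 2 * s) : s⁻¹ ^ 3 ≤ 8 * ff x * ff y := by
  have hA : (0:ℝ) < (1 + x) * (1 + y) := by nlinarith
  have h1 : ff x * ff y = (((1 + x) * (1 + y)) ^ ((3:ℝ)/2))⁻¹ := by
    rw [ff_eq (by linarith), ff_eq (by linarith),
      ← Real.mul_rpow (by linarith) (by linarith), ← Real.rpow_neg hA.le]
  have hB : ((1 + x) * (1 + y) : ℝ) ^ ((3:ℝ)/2) ≤ (1 + x + y) ^ (3:ℕ) := by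
    have h2 : (1 + x) * (1 + y) ≤ (1 + x + y) ^ (2:ℕ) := by nlinarith
    calc ((1 + x) * (1 + y)) ^ ((3:ℝ)/2)
        ≤ ((1 + x + y) ^ (2:ℕ) : ℝ) ^ ((3:ℝ)/2) :=
          Real.rpow_le_rpow hA.le h2 (by norm_num)
      _ = (1 + x + y) ^ (3:ℕ) := by
          rw [← Real.rpow_natCast (1 + x + y) 2, ← Real.rpow_mul (by linarith),
            ← Real.rpow_natCast (1 + x + y) 3]
          norm_num
  have hC : ((1 + x + y) : ℝ) ^ (3:ℕ) ≤ 8 * s ^ 3 := by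
    have := pow_le_pow_left₀ (by linarith : (0:ℝ) ≤ 1 + x + y) h 3
    calc ((1 + x + y) : ℝ) ^ 3 ≤ (2 * s) ^ 3 := this
      _ = 8 * s ^ 3 := by ring
  have hApow : (0:ℝ) < ((1 + x) * (1 + y)) ^ ((3:ℝ)/2) := Real.rpow_pos_of_pos hA _
  have hD : (8 * s ^ 3 : ℝ)⁻¹ ≤ (((1 + x) * (1 + y)) ^ ((3:ℝ)/2))⁻¹ :=
    inv_anti₀ hApow (hB.trans hC)
  have hE : (8:ℝ) * (8 * s ^ 3)⁻¹ = s⁻¹ ^ 3 := by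
    rw [mul_inv, inv_pow]
    field_simp
  calc s⁻¹ ^ 3 = 8 * (8 * s ^ 3)⁻¹ := hE.symm
    _ ≤ 8 * (((1 + x) * (1 + y)) ^ ((3:ℝ)/2))⁻¹ := by linarith
    _ = 8 * (ff x * ff y) := by rw [h1]
    _ = 8 * ff x * ff y := by ring

/-- ceiling facts -/
lemma ceil_facts {x : ℝ} (hx : 0 < x) :
    1 ≤ ⌈x⌉₊ ∧ x ≤ (⌈x⌉₊ : ℝ) ∧ (⌈x⌉₊ : ℝ) < x + 1 :=
  ⟨Nat.ceil_pos.mpr hx, Nat.le_ceil x, Nat.ceil_lt_add_one hx.le⟩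

/-- the master pointwise bound -/
lemma core {x y : ℝ} (hx : 0 < x) (hy : 0 < y) :
    Pf x y ≤ GG (x, y) ∧ |(uf x + uf y) / 2 * Pf x y| ≤ GG (x, y) := by
  obtain ⟨hi1, hxi, hix⟩ := ceil_facts hx
  obtain ⟨hj1, hyj, hjy⟩ := ceil_facts hy
  set i := ⌈x⌉₊ with hidef
  set j := ⌈y⌉₊ with hjdef
  have hi1' : (1:ℝ) ≤ (i:ℝ) := by exact_mod_cast hi1
  have hj1' : (1:ℝ) ≤ (j:ℝ) := by exact_mod_cast hj1
  have hs : (0:ℝ) < (i:ℝ) + j := by linarith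
  have hsum : 1 + x + y ≤ 2 * ((i:ℝ) + j) := by linarith
  have hpos1xy : (0:ℝ) < 1 + x + y := by linarith
  have hff : 0 ≤ 8 * ff x * ff y := by
    have := ff_nonneg x; have := ff_nonneg y; positivity
  by_cases hnb : i + 1 = j ∨ j + 1 = i
  · -- neighbor case
    have hstrip : x - 2 < y ∧ y < x + 2 := by
      rcases hnb with h | h
      · have : (j:ℝ) = (i:ℝ) + 1 := by exact_mod_cast h.symm
        constructor <;> linarith
      · have : (i:ℝ) = (j:ℝ) + 1 := by exact_mod_cast h.symm
        constructor <;> linarith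
    have hPval : Pf x y = ((i:ℝ) + j)⁻¹ ^ 2 := by
      rw [Pf, ← hidef, ← hjdef, pf, if_pos hnb]
    have hG1 : G1 (x, y) = 4 * ((1 + x + y)⁻¹) ^ 2 := by
      rw [G1, if_pos hstrip]
    have hPle : Pf x y ≤ GG (x, y) := by
      rw [GG, hG1, hPval]
      have := scale2 hpos1xy hsum
      linarith
    refine ⟨hPle, ?_⟩
    have hUval : |(uf x + uf y) / 2| = 1 := by
      rcases hnb with h | h
      · have : (uf x + uf y) / 2 = -((-1:ℝ) ^ i) := by
          rw [uf, uf, ← hidef, ← hjdef, ← h]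
          push_cast [pow_succ]
          ring
        rw [this, abs_neg, abs_pow, abs_neg, abs_one, one_pow]
      · have : (uf x + uf y) / 2 = -((-1:ℝ) ^ j) := by
          rw [uf, uf, ← hidef, ← hjdef, ← h]
          push_cast [pow_succ]
          ring
        rw [this, abs_neg, abs_pow, abs_neg, abs_one, one_pow]
    rw [abs_mul, hUval, one_mul, abs_of_nonneg (Pf_nonneg x y)]
    exact hPle
  · -- non-neighbor case
    have hPval : Pf x y = ((i:ℝ) + j)⁻¹ ^ 4 := by
      rw [Pf, ← hidef, ← hjdef, pf, if_neg hnb]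
    have hinv1 : ((i:ℝ) + j)⁻¹ ≤ 1 := by
      rw [inv_le_one_iff₀]; right; linarith
    have hinvnn : (0:ℝ) ≤ ((i:ℝ) + j)⁻¹ := by positivity
    have hcube := cube_bound hx hy hs hsum
    have hG1nn : 0 ≤ G1 (x, y) := by
      rw [G1]; split
      · positivity
      · exact le_rfl
    have hPle : Pf x y ≤ GG (x, y) := by
      have h4 : ((i:ℝ) + j)⁻¹ ^ 4 ≤ ((i:ℝ) + j)⁻¹ ^ 3 :=
        pow_le_pow_of_le_one hinvnn hinv1 (by norm_num)
      rw [GG, hPval]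
      linarith
    refine ⟨hPle, ?_⟩
    have hUle : |(uf x + uf y) / 2| ≤ (i:ℝ) + j := by
      rw [uf, uf, ← hidef, ← hjdef]
      have h1 : |2 * (-1:ℝ) ^ i * (i:ℝ)| = 2 * i := by
        rw [abs_mul, abs_mul, abs_pow, abs_neg, abs_one, one_pow]
        simp [abs_of_nonneg, Nat.cast_nonneg]
      have h2 : |2 * (-1:ℝ) ^ j * (j:ℝ)| = 2 * j := by
        rw [abs_mul, abs_mul, abs_pow, abs_neg, abs_one, one_pow]
        simp [abs_of_nonneg, Nat.cast_nonneg]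
      calc |(2 * (-1:ℝ) ^ i * (i:ℝ) + 2 * (-1:ℝ) ^ j * (j:ℝ)) / 2|
          ≤ (|2 * (-1:ℝ) ^ i * (i:ℝ)| + |2 * (-1:ℝ) ^ j * (j:ℝ)|) / 2 := by
            rw [abs_div, abs_two]
            gcongr
            exact abs_add_le _ _
        _ = (i:ℝ) + j := by rw [h1, h2]; ring
    rw [abs_mul, abs_of_nonneg (Pf_nonneg x y), hPval]
    calc |(uf x + uf y) / 2| * ((i:ℝ) + j)⁻¹ ^ 4
        ≤ ((i:ℝ) + j) * ((i:ℝ) + j)⁻¹ ^ 4 := by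
          apply mul_le_mul_of_nonneg_right hUle (by positivity)
      _ = ((i:ℝ) + j)⁻¹ ^ 3 := by
          field_simp
      _ ≤ GG (x, y) := by rw [GG]; linarith


lemma intf : IntegrableOn ff (Ioi (0:ℝ)) volume := by
  rw [← Ioc_union_Ioi_eq_Ioi (zero_le_one : (0:ℝ) ≤ 1)]
  apply IntegrableOn.union
  · apply Integrable.mono' (g := fun _ => (1:ℝ))
      ((integrableOn_const_iff).mpr (Or.inr (by rw [Real.volume_Ioc]; exact ENNReal.ofReal_lt_top)))
      measff.aestronglyMeasurable
    filter_upwards [ae_restrict_mem measurableSet_Ioc] with t ht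
    rw [Real.norm_eq_abs, abs_of_nonneg (ff_nonneg t), ff_eq (by linarith [ht.1])]
    exact Real.rpow_le_one_of_one_le_of_nonpos (by linarith [ht.1]) (by norm_num)
  · apply Integrable.mono'
      (integrableOn_Ioi_rpow_of_lt (by norm_num : (-(3/2):ℝ) < -1) one_pos)
      measff.aestronglyMeasurable
    filter_upwards [ae_restrict_mem measurableSet_Ioi] with t ht
    have ht1 : (1:ℝ) < t := ht
    rw [Real.norm_eq_abs, abs_of_nonneg (ff_nonneg t), ff_eq (by linarith)]
    rw [Real.rpow_neg (by linarith), Real.rpow_neg (by linarith)]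
    exact inv_anti₀ (Real.rpow_pos_of_pos (by linarith) _)
      (Real.rpow_le_rpow (by linarith) (by linarith) (by norm_num))

lemma measM : Measurable fun x : ℝ => (1 + x)⁻¹ ^ 2 :=
  ((measurable_const.add measurable_id).inv).pow measurable_const

lemma intM : IntegrableOn (fun x : ℝ => (1 + x)⁻¹ ^ 2) (Ioi (0:ℝ)) volume := by
  rw [← Ioc_union_Ioi_eq_Ioi (zero_le_one : (0:ℝ) ≤ 1)]
  apply IntegrableOn.union
  · apply Integrable.mono' (g := fun _ => (1:ℝ))
      ((integrableOn_const_iff).mpr (Or.inr (by rw [Real.volume_Ioc]; exact ENNReal.ofReal_lt_top)))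
      measM.aestronglyMeasurable
    filter_upwards [ae_restrict_mem measurableSet_Ioc] with t ht
    have h1 : (1:ℝ) ≤ 1 + t := by linarith [ht.1]
    have h2 : (1 + t)⁻¹ ≤ 1 := by simpa using inv_anti₀ one_pos h1
    have h3 : (0:ℝ) ≤ (1 + t)⁻¹ := by positivity
    rw [Real.norm_eq_abs, abs_of_nonneg (by positivity)]
    nlinarith
  · apply Integrable.mono'
      (integrableOn_Ioi_rpow_of_lt (by norm_num : ((-2:ℝ)) < -1) one_pos)
      measM.aestronglyMeasurable
    filter_upwards [ae_restrict_mem measurableSet_Ioi] with t ht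
    have ht1 : (1:ℝ) < t := ht
    have h0 : (0:ℝ) < t := by linarith
    have hrw : t ^ ((-2:ℝ)) = (t ^ (2:ℕ))⁻¹ := by
      rw [show ((-2:ℝ)) = -((2:ℕ):ℝ) by norm_num, Real.rpow_neg h0.le, Real.rpow_natCast]
    rw [Real.norm_eq_abs, abs_of_nonneg (by positivity), hrw, inv_pow]
    apply inv_anti₀ (by positivity)
    nlinarith

lemma intG1 :
    Integrable G1 ((volume.restrict (Ioi (0:ℝ))).prod (volume.restrict (Ioi (0:ℝ)))) := by
  rw [integrable_prod_iff measG1.aestronglyMeasurable]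
  constructor
  · filter_upwards [ae_restrict_mem measurableSet_Ioi] with x hx
    have hx0 : (0:ℝ) < x := hx
    have hfun : (fun y => G1 (x, y))
        = (Ioo (x-2) (x+2)).indicator (fun y => 4 * ((1 + x + y)⁻¹) ^ 2) := by
      funext y; simp only [G1, indicator_apply, mem_Ioo]
    rw [hfun]
    apply IntegrableOn.integrable_indicator _ measurableSet_Ioo
    rw [IntegrableOn, Measure.restrict_restrict measurableSet_Ioo]
    apply Integrable.mono' (g := fun _ => (4:ℝ))
      ((integrableOn_const_iff).mpr (Or.inr
        (lt_of_le_of_lt (measure_mono inter_subset_left) measure_Ioo_lt_top)))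
      (((((measurable_const.add measurable_id).inv).pow measurable_const).const_mul
        4).aestronglyMeasurable)
    filter_upwards [ae_restrict_mem (measurableSet_Ioo.inter measurableSet_Ioi)] with y hy
    have hy0 : (0:ℝ) < y := hy.2
    have h1 : (1:ℝ) ≤ 1 + x + y := by linarith
    have h2 : (1 + x + y)⁻¹ ≤ 1 := by simpa using inv_anti₀ one_pos h1
    have h3 : (0:ℝ) ≤ (1 + x + y)⁻¹ := by positivity
    simp only [Pi.add_apply, Pi.inv_apply, id_eq]
    rw [Real.norm_eq_abs, abs_of_nonneg (by positivity)]
    nlinarith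
  · apply Integrable.mono' (intM.const_mul 16)
      (measG1.norm.aestronglyMeasurable.integral_prod_right')
    filter_upwards [ae_restrict_mem measurableSet_Ioi] with x hx
    have hx0 : (0:ℝ) < x := hx
    have hG1x : ∀ y, G1 (x, y)
        = (Ioo (x-2) (x+2)).indicator (fun y => 4 * ((1 + x + y)⁻¹) ^ 2) y := by
      intro y; simp only [G1, indicator_apply, mem_Ioo]
    have hfun : (fun y => ‖G1 (x, y)‖)
        = (Ioo (x-2) (x+2)).indicator fun y => ‖4 * ((1 + x + y)⁻¹) ^ 2‖ := by
      funext y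
      rw [hG1x y, norm_indicator_eq_indicator_norm]
    have hC : (0:ℝ) ≤ 4 * (1 + x)⁻¹ ^ 2 := by positivity
    have hbound : ‖∫ y in Ioi (0:ℝ), ‖G1 (x, y)‖‖ ≤ 16 * (1 + x)⁻¹ ^ 2 := by
      rw [show (∫ y in Ioi (0:ℝ), ‖G1 (x, y)‖)
          = ∫ y in Ioo (x-2) (x+2) ∩ Ioi 0, ‖4 * ((1 + x + y)⁻¹) ^ 2‖ by
        rw [hfun, integral_indicator measurableSet_Ioo,
          Measure.restrict_restrict measurableSet_Ioo]]
      have hmeasfin : volume (Ioo (x-2) (x+2) ∩ Ioi (0:ℝ)) < ⊤ :=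
        lt_of_le_of_lt (measure_mono inter_subset_left) measure_Ioo_lt_top
      have hCb : ∀ y ∈ Ioo (x-2) (x+2) ∩ Ioi (0:ℝ),
          ‖‖4 * ((1 + x + y)⁻¹) ^ 2‖‖ ≤ 4 * (1 + x)⁻¹ ^ 2 := by
        intro y hy
        have hy0 : (0:ℝ) < y := hy.2
        have h1 : (0:ℝ) < 1 + x := by linarith
        have h2 : 1 + x ≤ 1 + x + y := by linarith
        have h3 := inv_pow_le_inv_pow 2 h1 h2
        rw [norm_norm, Real.norm_eq_abs, abs_of_nonneg (by positivity)]
        nlinarith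
      have hest := norm_setIntegral_le_of_norm_le_const (μ := volume)
        hmeasfin hCb
      refine hest.trans ?_
      have htr : (volume (Ioo (x-2) (x+2) ∩ Ioi (0:ℝ))).toReal ≤ 4 := by
        have h1 : volume (Ioo (x-2) (x+2) ∩ Ioi (0:ℝ)) ≤ volume (Ioo (x-2) (x+2)) :=
          measure_mono inter_subset_left
        have h2 : (volume (Ioo (x-2) (x+2))).toReal = 4 := by
          rw [Real.volume_Ioo]; norm_num [ENNReal.toReal_ofReal]
        calc (volume (Ioo (x-2) (x+2) ∩ Ioi (0:ℝ))).toReal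
            ≤ (volume (Ioo (x-2) (x+2))).toReal :=
              ENNReal.toReal_mono measure_Ioo_lt_top.ne h1
          _ = 4 := h2
      rw [measureReal_def]
      nlinarith [htr, hC]
    refine hbound.trans_eq ?_
    ring

lemma intGG :
    Integrable GG ((volume.restrict (Ioi (0:ℝ))).prod (volume.restrict (Ioi (0:ℝ)))) := by
  apply intG1.add
  exact (intf.const_mul 8).mul_prod intf

lemma sq_int {F : ℝ × ℝ → ℝ} (hm : Measurable F)
    (hb : ∀ x y : ℝ, 0 < x → 0 < y → |F (x, y)| ≤ GG (x, y)) :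
    IntegrableOn F (Ioi 0 ×ˢ Ioi 0) volume := by
  rw [IntegrableOn, Measure.volume_eq_prod, ← Measure.prod_restrict]
  apply Integrable.mono' intGG hm.aestronglyMeasurable
  rw [Measure.prod_restrict]
  filter_upwards [ae_restrict_mem (measurableSet_Ioi.prod measurableSet_Ioi)] with p hp
  have h := hb p.1 p.2 hp.1 hp.2
  simpa [Real.norm_eq_abs] using h

lemma P1_lower {x : ℝ} (hx : 0 < x)
    (hint : Integrable (fun y => Pf x y) (volume.restrict (Ioi (0:ℝ)))) :
    ((⌈x⌉₊:ℝ) + ⌈x⌉₊ + 1)⁻¹ ^ 2 ≤ ∫ y in Ioi (0:ℝ), Pf x y := by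
  obtain ⟨hi1, hxi, hix⟩ := ceil_facts hx
  set i := ⌈x⌉₊ with hidef
  have hi1' : (1:ℝ) ≤ (i:ℝ) := by exact_mod_cast hi1
  have hval : ∀ y ∈ Ioc (i:ℝ) ((i:ℝ)+1), Pf x y = ((i:ℝ) + i + 1)⁻¹ ^ 2 := by
    intro y hy
    have hceil : ⌈y⌉₊ = i + 1 := by
      rw [Nat.ceil_eq_iff (by omega)]
      constructor
      · push_cast
        simpa using hy.1
      · push_cast
        exact hy.2
    rw [Pf, hceil, ← hidef, pf, if_pos (Or.inl rfl)]
    push_cast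
    ring_nf
  calc ((i:ℝ) + i + 1)⁻¹ ^ 2
      = ∫ y in Ioc (i:ℝ) ((i:ℝ)+1), Pf x y := by
        rw [setIntegral_congr_fun measurableSet_Ioc hval, setIntegral_const,
          Real.volume_real_Ioc]
        norm_num
    _ ≤ ∫ y in Ioi (0:ℝ), Pf x y := by
        apply setIntegral_mono_set hint
        · exact Filter.Eventually.of_forall fun y => Pf_nonneg x y
        · apply HasSubset.Subset.eventuallyLE
          intro y hy
          have : (i:ℝ) < y := hy.1
          exact mem_Ioi.mpr (by linarith)

end Ex3aux

/-- Example 3: there exist a symmetric density `P > 0` on `(0,∞)²` (integrable, hence a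
probability density up to normalization) and a measurable `u` on `(0,∞)` such that
`U := G_{1,2}(u)` is in `L¹((0,∞)²; P d²x)` while `u ∉ L¹((0,∞); P₍₁₎ dx)`, where
`P₍₁₎(x) = ∫_{(0,∞)} P(x,y) dy`. -/
theorem exists_gmean_integrable_kernel_not_integrable :
    ∃ P : ℝ → ℝ → ℝ, ∃ u : ℝ → ℝ,
      Measurable (fun p : ℝ × ℝ => P p.1 p.2) ∧ Measurable u ∧
      (∀ x y, P x y = P y x) ∧
      (∀ x ∈ Set.Ioi (0 : ℝ), ∀ y ∈ Set.Ioi (0 : ℝ), 0 < P x y) ∧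
      IntegrableOn (fun p : ℝ × ℝ => P p.1 p.2) (Set.Ioi 0 ×ˢ Set.Ioi 0) volume ∧
      IntegrableOn (fun p : ℝ × ℝ => ((u p.1 + u p.2) / 2) * P p.1 p.2)
        (Set.Ioi 0 ×ˢ Set.Ioi 0) volume ∧
      ¬ IntegrableOn (fun x : ℝ => u x * ∫ y in Set.Ioi (0 : ℝ), P x y)
        (Set.Ioi 0) volume := by
  have intP : IntegrableOn (fun p : ℝ × ℝ => Pf p.1 p.2) (Set.Ioi 0 ×ˢ Set.Ioi 0) volume := by
    apply sq_int measPf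
    intro x y hx hy
    rw [abs_of_nonneg (Pf_nonneg x y)]
    exact (core hx hy).1
  refine ⟨Pf, uf, measPf, measUf, fun x y => Pf_symm x y,
    fun x hx y hy => Pf_pos hx hy, intP, ?_, ?_⟩
  · -- integrability of U · P
    apply sq_int
    · exact (((measUf.comp measurable_fst).add (measUf.comp measurable_snd)).div_const 2).mul
        measPf
    · intro x y hx hy
      exact (core hx hy).2
  · -- non-integrability
    intro hcon
    have hPprod : Integrable (fun p : ℝ × ℝ => Pf p.1 p.2)
        ((volume.restrict (Ioi (0:ℝ))).prod (volume.restrict (Ioi (0:ℝ)))) := by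
      have := intP
      rwa [IntegrableOn, Measure.volume_eq_prod, ← Measure.prod_restrict] at this
    have h2 : IntegrableOn (fun x => uf x * ∫ y in Ioi (0:ℝ), Pf x y) (Ioi 2) volume :=
      hcon.mono_set (Ioi_subset_Ioi (by norm_num))
    have haeint : ∀ᵐ x ∂(volume.restrict (Ioi (2:ℝ))),
        Integrable (fun y => Pf x y) (volume.restrict (Ioi (0:ℝ))) :=
      ae_restrict_of_ae_restrict_of_subset (Ioi_subset_Ioi (by norm_num))
        hPprod.prod_right_ae
    have key : Integrable (fun x : ℝ => x⁻¹) (volume.restrict (Ioi (2:ℝ))) := by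
      apply Integrable.mono' (h2.norm.const_mul 8) measurable_inv.aestronglyMeasurable
      filter_upwards [ae_restrict_mem measurableSet_Ioi, haeint] with x hx hintx
      have hx2 : (2:ℝ) < x := hx
      have hx0 : (0:ℝ) < x := by linarith
      obtain ⟨hi1, hxi, hix⟩ := ceil_facts hx0
      set i := ⌈x⌉₊ with hidef
      have hlow := P1_lower hx0 hintx
      have hi3 : (3:ℕ) ≤ i := by
        have h1 : (2:ℝ) < (i:ℝ) := lt_of_lt_of_le hx2 hxi
        exact_mod_cast Nat.lt_of_lt_of_le (by exact_mod_cast h1) le_rfl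
      have hi3' : (3:ℝ) ≤ (i:ℝ) := by exact_mod_cast hi3
      have hIpos : (0:ℝ) < ((i:ℝ) + i + 1)⁻¹ ^ 2 := by positivity
      have hInn : 0 ≤ ∫ y in Ioi (0:ℝ), Pf x y := le_trans hIpos.le hlow
      have hux : |uf x| = 2 * (i:ℝ) := by
        rw [uf, ← hidef, abs_mul, abs_mul, abs_pow, abs_neg, abs_one, one_pow,
          abs_two, mul_one, abs_of_nonneg (Nat.cast_nonneg i)]
      rw [Real.norm_eq_abs, abs_of_nonneg (inv_nonneg.mpr hx0.le),
        Real.norm_eq_abs, abs_mul, hux, abs_of_nonneg hInn]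
      have hineq : x⁻¹ ≤ 8 * (2 * (i:ℝ) * (((i:ℝ) + i + 1)⁻¹ ^ 2)) := by
        have hrw : 8 * (2 * (i:ℝ) * (((i:ℝ) + i + 1)⁻¹ ^ 2))
            = (16 * (i:ℝ)) / (((i:ℝ) + i + 1) ^ 2) := by
          rw [inv_pow, div_eq_mul_inv]; ring
        rw [hrw, inv_eq_one_div, div_le_div_iff₀ hx0 (by positivity)]
        nlinarith [hix, hxi, hi3', hx2]
      calc x⁻¹ ≤ 8 * (2 * (i:ℝ) * (((i:ℝ) + i + 1)⁻¹ ^ 2)) := hineq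
        _ ≤ 8 * (2 * (i:ℝ) * ∫ y in Ioi (0:ℝ), Pf x y) := by gcongr
    have hrpow : IntegrableOn (fun x : ℝ => x ^ (-1:ℝ)) (Ioi (2:ℝ)) volume := by
      apply key.congr
      filter_upwards [ae_restrict_mem measurableSet_Ioi] with x hx
      have hx0 : (0:ℝ) < x := by have : (2:ℝ) < x := hx; linarith
      rw [Real.rpow_neg_one]
    rw [integrableOn_Ioi_rpow_iff (by norm_num : (0:ℝ) < 2)] at hrpow
    norm_num at hrpow
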